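/- The one-parameter family of matrices satisfies the relation: if [r/s]^*_q denotes the right (* = ♯) or left (* = ♭) q-deformation of the positive rational r/s, then the corresponding q-deformation of -r/s defined via the negated word t_{1,q}^{-a_1} t_{2,q}^{a_2} ⋯ t_{1,q}^{-a_{2m-1}} t_{2,q}^{a_{2m}} satisfies [-r/s]^*_q = -q^{-1} · [r/s]^*_{q^{-1}}. -/

import Mathlib

noncomputable section

def cfVal : List ℤ → ℚ
  | [] => 0
  | a :: t => a + (cfVal t)⁻¹

def pairsToList (L : List (ℕ × ℕ)) : List ℤ :=
  L.flatMap fun p => [(p.1 : ℤ), (p.2 : ℤ)]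

def IsCFE (L : List (ℕ × ℕ)) (x : ℚ) : Prop :=
  L ≠ [] ∧ (∀ p ∈ L, 1 ≤ p.2) ∧ (∀ p ∈ L.tail, 1 ≤ p.1) ∧
    cfVal (pairsToList L) = x

def t1q {K : Type*} [Field K] (q : K) : Matrix (Fin 2) (Fin 2) K := !![q, 1; 0, 1]
def t2q {K : Type*} [Field K] (q : K) : Matrix (Fin 2) (Fin 2) K := !![1, 0; -q, q]
def t1qInv {K : Type*} [Field K] (q : K) : Matrix (Fin 2) (Fin 2) K := !![q⁻¹, -q⁻¹; 0, 1]
def t2qInv {K : Type*} [Field K] (q : K) : Matrix (Fin 2) (Fin 2) K := !![1, 0; 1, q⁻¹]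

def qWord {K : Type*} [Field K] (q : K) : List (ℕ × ℕ) → Matrix (Fin 2) (Fin 2) K
  | [] => 1
  | (a, b) :: rest => t1q q ^ a * t2qInv q ^ b * qWord q rest

def qWordNeg {K : Type*} [Field K] (q : K) : List (ℕ × ℕ) → Matrix (Fin 2) (Fin 2) K
  | [] => 1
  | (a, b) :: rest => t1qInv q ^ a * t2q q ^ b * qWordNeg q rest

def qSharpK {K : Type*} [Field K] (q : K) (a : ℕ) : K := ∑ i ∈ Finset.range a, q ^ i

def qFlatK {K : Type*} [Field K] (q : K) (a : ℕ) : K :=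
  (∑ i ∈ Finset.range (a - 1), q ^ i) + q ^ a

def rightCF {K : Type*} [Field K] (q : K) : List (ℕ × ℕ) → K
  | [] => 0
  | (a, b) :: rest =>
      qSharpK q a + q ^ a / (qSharpK q⁻¹ b + (q⁻¹) ^ b / rightCF q rest)

def leftCF {K : Type*} [Field K] (q : K) : List (ℕ × ℕ) → K
  | [] => 0
  | [(a, b)] => qSharpK q a + q ^ a / qFlatK q⁻¹ b
  | (a, b) :: rest =>
      qSharpK q a + q ^ a / (qSharpK q⁻¹ b + (q⁻¹) ^ b / leftCF q rest)

def FareyDecomp (p q u v : ℕ) : Prop :=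
  Nat.Coprime p q ∧ Nat.Coprime u v ∧ u * q = p * v + 1

def AssocInt (r s l : ℕ) : Prop :=
  ∃ (L : List (ℕ × ℕ)) (a b : ℕ),
    IsCFE L ((r : ℚ) / s) ∧ L.getLast? = some (a, b) ∧
    l = if 2 ≤ b then 0 else a

def bumpLast : List (ℕ × ℕ) → List (ℕ × ℕ)
  | [] => []
  | [(c, d)] => [(c, d + 1)]
  | x :: xs => x :: bumpLast xs


open Matrix Polynomial

variable {K : Type*} [Field K]

lemma t1q_pow (q : K) (a : ℕ) : t1q q ^ a = !![q ^ a, qSharpK q a; 0, 1] := by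
  induction a with
  | zero => simp [qSharpK, Matrix.one_fin_two]
  | succ n ih =>
      rw [pow_succ, ih, t1q, Matrix.mul_fin_two]
      simp [qSharpK, Finset.sum_range_succ, pow_succ, add_comm]

lemma t2qInv_pow (q : K) (b : ℕ) :
    t2qInv q ^ b = !![1, 0; qSharpK q⁻¹ b, (q⁻¹) ^ b] := by
  induction b with
  | zero => simp [qSharpK, Matrix.one_fin_two]
  | succ n ih =>
      rw [pow_succ, ih, t2qInv, Matrix.mul_fin_two]
      simp [qSharpK, Finset.sum_range_succ, pow_succ]

def Amat (q : K) (a b : ℕ) : Matrix (Fin 2) (Fin 2) K :=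
  !![q ^ a + qSharpK q a * qSharpK q⁻¹ b, qSharpK q a * (q⁻¹) ^ b;
     qSharpK q⁻¹ b, (q⁻¹) ^ b]

lemma qWord_cons (q : K) (a b : ℕ) (rest : List (ℕ × ℕ)) :
    qWord q ((a, b) :: rest) = Amat q a b * qWord q rest := by
  rw [qWord, t1q_pow, t2qInv_pow, Amat, Matrix.mul_fin_two]
  simp

lemma mul2 (A B : Matrix (Fin 2) (Fin 2) K) (i j : Fin 2) :
    (A * B) i j = A i 0 * B 0 j + A i 1 * B 1 j := by
  rw [Matrix.mul_apply, Fin.sum_univ_two]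

lemma Amat_00 (q : K) (a b : ℕ) :
    Amat q a b 0 0 = q ^ a + qSharpK q a * qSharpK q⁻¹ b := rfl
lemma Amat_01 (q : K) (a b : ℕ) : Amat q a b 0 1 = qSharpK q a * (q⁻¹) ^ b := rfl
lemma Amat_10 (q : K) (a b : ℕ) : Amat q a b 1 0 = qSharpK q⁻¹ b := rfl
lemma Amat_11 (q : K) (a b : ℕ) : Amat q a b 1 1 = (q⁻¹) ^ b := rfl

lemma sharp_nonneg (q : ℝ) (h : 0 < q) (a : ℕ) : 0 ≤ qSharpK q a :=
  Finset.sum_nonneg fun i _ => (pow_pos h i).le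

lemma sharp_pos (q : ℝ) (h : 0 < q) {b : ℕ} (hb : 1 ≤ b) : 0 < qSharpK q b :=
  Finset.sum_pos (fun i _ => pow_pos h i) ⟨0, Finset.mem_range.mpr hb⟩

lemma flat_eq (q : K) (hq : q ≠ 0) {b : ℕ} (hb : 1 ≤ b) :
    qFlatK q⁻¹ b = qSharpK q⁻¹ b + (q⁻¹) ^ b * (1 - q) := by
  obtain ⟨c, rfl⟩ : ∃ c, b = c + 1 := ⟨b - 1, (Nat.succ_pred_eq_of_pos hb).symm⟩
  simp only [qFlatK, qSharpK, Nat.add_sub_cancel, Finset.sum_range_succ]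
  field_simp
  ring_nf; rw [mul_inv_cancel₀ hq]; ring

lemma divHelperR (Sa qa sb qb n0 n1 : ℝ) (h0 : 0 < n0) (h1 : 0 < n1)
    (hsb : 0 < sb) (hqb : 0 < qb) :
    ((qa + Sa * sb) * n0 + Sa * qb * n1) / (sb * n0 + qb * n1)
      = Sa + qa / (sb + qb / (n0 / n1)) := by
  have hd : 0 < sb * n0 + qb * n1 := by positivity
  have hx : 0 < n0 / n1 := by positivity
  have h2 : 0 < sb + qb / (n0 / n1) := by positivity
  field_simp
  ring

lemma divBaseR (Sa qa sb : ℝ) (hsb : 0 < sb) :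
    (qa + Sa * sb) / sb = Sa + qa / sb := by
  field_simp; ring

set_option maxHeartbeats 1000000 in
theorem keyReal (q : ℝ) (hq0 : 0 < q) (hq1 : q < 1) :
    ∀ L : List (ℕ × ℕ), (∀ p ∈ L, 1 ≤ p.2) → L ≠ [] →
      (0 < qWord q L 0 0 ∧ 0 < qWord q L 1 0 ∧ 0 ≤ qWord q L 0 1 ∧ 0 < qWord q L 1 1) ∧
      qWord q L 0 0 / qWord q L 1 0 = rightCF q L ∧
      (0 < qWord q L 0 0 + qWord q L 0 1 * (1 - q) ∧
       0 < qWord q L 1 0 + qWord q L 1 1 * (1 - q)) ∧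
      (qWord q L 0 0 + qWord q L 0 1 * (1 - q)) /
        (qWord q L 1 0 + qWord q L 1 1 * (1 - q)) = leftCF q L := by
  intro L
  induction L with
  | nil => intro _ h; exact absurd rfl h
  | cons p rest ih =>
    obtain ⟨a, b⟩ := p
    intro hb _
    have hb1 : 1 ≤ b := hb (a, b) List.mem_cons_self
    have hqi : 0 < q⁻¹ := inv_pos.mpr hq0
    have hsb : 0 < qSharpK q⁻¹ b := sharp_pos _ hqi hb1
    have hqb : 0 < (q⁻¹ : ℝ) ^ b := pow_pos hqi b
    have hSa : 0 ≤ qSharpK q a := sharp_nonneg _ hq0 a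
    have hqa : 0 < q ^ a := pow_pos hq0 a
    have h1q : 0 < 1 - q := by linarith
    have hAd : 0 < q ^ a + qSharpK q a * qSharpK q⁻¹ b := by nlinarith
    rcases rest with _ | ⟨p2, rest2⟩
    · -- base case
      have hM : qWord q [(a, b)] = Amat q a b := by
        rw [qWord_cons]; simp [qWord]
      rw [hM, Amat_00, Amat_01, Amat_10, Amat_11]
      refine ⟨⟨hAd, hsb, by positivity, hqb⟩, ?_,
        ⟨by nlinarith [mul_nonneg (mul_nonneg hSa hqb.le) h1q.le],
         by nlinarith [mul_pos hqb h1q]⟩, ?_⟩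
      · simp only [rightCF, div_zero, add_zero]
        exact divBaseR _ _ _ hsb
      · rw [leftCF, flat_eq q (ne_of_gt hq0) hb1]
        have hF : 0 < qSharpK q⁻¹ b + (q⁻¹) ^ b * (1 - q) := by
          nlinarith [mul_pos hqb h1q]
        have hnum : q ^ a + qSharpK q a * qSharpK q⁻¹ b + qSharpK q a * (q⁻¹) ^ b * (1 - q)
            = q ^ a + qSharpK q a * (qSharpK q⁻¹ b + (q⁻¹) ^ b * (1 - q)) := by ring
        rw [hnum, divBaseR _ _ _ hF]
    · -- inductive step
      set R := p2 :: rest2 with hR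
      have hbR : ∀ p ∈ R, 1 ≤ p.2 := fun p hp => hb p (List.mem_cons_of_mem _ hp)
      obtain ⟨⟨hN00, hN10, hN01, hN11⟩, hNr, ⟨hv0, hv1⟩, hNl⟩ := ih hbR (by simp [hR])
      set N := qWord q R with hN
      have hM00 : qWord q ((a, b) :: R) 0 0
          = (q ^ a + qSharpK q a * qSharpK q⁻¹ b) * N 0 0
            + qSharpK q a * (q⁻¹) ^ b * N 1 0 := by
        rw [qWord_cons, mul2, Amat_00, Amat_01]
      have hM01 : qWord q ((a, b) :: R) 0 1
          = (q ^ a + qSharpK q a * qSharpK q⁻¹ b) * N 0 1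
            + qSharpK q a * (q⁻¹) ^ b * N 1 1 := by
        rw [qWord_cons, mul2, Amat_00, Amat_01]
      have hM10 : qWord q ((a, b) :: R) 1 0
          = qSharpK q⁻¹ b * N 0 0 + (q⁻¹) ^ b * N 1 0 := by
        rw [qWord_cons, mul2, Amat_10, Amat_11]
      have hM11 : qWord q ((a, b) :: R) 1 1
          = qSharpK q⁻¹ b * N 0 1 + (q⁻¹) ^ b * N 1 1 := by
        rw [qWord_cons, mul2, Amat_10, Amat_11]
      have ev0 : qWord q ((a, b) :: R) 0 0 + qWord q ((a, b) :: R) 0 1 * (1 - q)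
          = (q ^ a + qSharpK q a * qSharpK q⁻¹ b) * (N 0 0 + N 0 1 * (1 - q))
            + qSharpK q a * (q⁻¹) ^ b * (N 1 0 + N 1 1 * (1 - q)) := by
        rw [hM00, hM01]; ring
      have ev1 : qWord q ((a, b) :: R) 1 0 + qWord q ((a, b) :: R) 1 1 * (1 - q)
          = qSharpK q⁻¹ b * (N 0 0 + N 0 1 * (1 - q))
            + (q⁻¹) ^ b * (N 1 0 + N 1 1 * (1 - q)) := by
        rw [hM10, hM11]; ring
      refine ⟨⟨?_, ?_, ?_, ?_⟩, ?_, ⟨?_, ?_⟩, ?_⟩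
      · rw [hM00]
        nlinarith [mul_pos hAd hN00, mul_nonneg (mul_nonneg hSa hqb.le) hN10.le]
      · rw [hM10]
        nlinarith [mul_pos hsb hN00, mul_pos hqb hN10]
      · rw [hM01]
        nlinarith [mul_nonneg hAd.le hN01, mul_nonneg (mul_nonneg hSa hqb.le) hN11.le]
      · rw [hM11]
        nlinarith [mul_nonneg hsb.le hN01, mul_pos hqb hN11]
      · rw [hM00, hM10, rightCF, ← hNr]
        exact divHelperR _ _ _ _ _ _ hN00 hN10 hsb hqb
      · rw [ev0]
        nlinarith [mul_pos hAd hv0, mul_nonneg (mul_nonneg hSa hqb.le) hv1.le]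
      · rw [ev1]
        nlinarith [mul_pos hsb hv0, mul_pos hqb hv1]
      · rw [ev0, ev1, leftCF.eq_3 q a b R (by simp [hR]), ← hNl]
        exact divHelperR _ _ _ _ _ _ hv0 hv1 hsb hqb

section Maps
variable {L' : Type*} [Field L'] (f : K →+* L')

lemma map_qSharpK (q : K) (a : ℕ) : f (qSharpK q a) = qSharpK (f q) a := by
  simp [qSharpK, map_sum, map_pow]

lemma map_qFlatK (q : K) (a : ℕ) : f (qFlatK q a) = qFlatK (f q) a := by
  simp [qFlatK, map_sum, map_pow]

lemma map_rightCF (q : K) (L : List (ℕ × ℕ)) :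
    f (rightCF q L) = rightCF (f q) L := by
  induction L with
  | nil => simp [rightCF]
  | cons p rest ih =>
      obtain ⟨a, b⟩ := p
      rw [rightCF, rightCF]
      simp [map_add, map_div₀, map_pow, map_inv₀, map_qSharpK, ih]

lemma map_leftCF (q : K) (L : List (ℕ × ℕ)) :
    f (leftCF q L) = leftCF (f q) L := by
  induction L with
  | nil => simp [leftCF]
  | cons p rest ih =>
      obtain ⟨a, b⟩ := p
      rcases rest with _ | ⟨p2, rest2⟩
      · rw [leftCF.eq_2, leftCF.eq_2]
        simp [map_add, map_div₀, map_pow, map_inv₀, map_qSharpK, map_qFlatK]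
      · rw [leftCF.eq_3 q a b (p2 :: rest2) (by simp),
            leftCF.eq_3 (f q) a b (p2 :: rest2) (by simp)]
        simp [map_add, map_div₀, map_pow, map_inv₀, map_qSharpK, ih]

lemma map_t1q (q : K) : (t1q q).map f = t1q (f q) := by
  ext i j
  fin_cases i <;> fin_cases j <;> simp [t1q, Matrix.map_apply]

lemma map_t2qInv (q : K) : (t2qInv q).map f = t2qInv (f q) := by
  ext i j
  fin_cases i <;> fin_cases j <;> simp [t2qInv, Matrix.map_apply, map_inv₀]

lemma map_qWord (q : K) (L : List (ℕ × ℕ)) :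
    f.mapMatrix (qWord q L) = qWord (f q) L := by
  induction L with
  | nil => simp [qWord]
  | cons p rest ih =>
      obtain ⟨a, b⟩ := p
      rw [qWord, qWord, _root_.map_mul, _root_.map_mul, map_pow, map_pow, ih]
      have h1 : f.mapMatrix (t1q q) = t1q (f q) := map_t1q f q
      have h2 : f.mapMatrix (t2qInv q) = t2qInv (f q) := map_t2qInv f q
      rw [h1, h2]

end Maps

section Conj
variable (q : K)

def Dmat (q : K) : Matrix (Fin 2) (Fin 2) K := !![1, 0; 0, -q]
def Dmat' (q : K) : Matrix (Fin 2) (Fin 2) K := !![1, 0; 0, -q⁻¹]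

lemma DD' (hq : q ≠ 0) : Dmat q * Dmat' q = 1 := by
  rw [Dmat, Dmat', Matrix.mul_fin_two, Matrix.one_fin_two]
  simp [mul_inv_cancel₀ hq]

lemma D'D (hq : q ≠ 0) : Dmat' q * Dmat q = 1 := by
  rw [Dmat, Dmat', Matrix.mul_fin_two, Matrix.one_fin_two]
  simp [inv_mul_cancel₀ hq]

lemma conjMul2 (hq : q ≠ 0) (A B : Matrix (Fin 2) (Fin 2) K) :
    (Dmat q * A * Dmat' q) * (Dmat q * B * Dmat' q) = Dmat q * (A * B) * Dmat' q := by
  simp only [Matrix.mul_assoc]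
  rw [← Matrix.mul_assoc (Dmat' q) (Dmat q), D'D q hq, Matrix.one_mul]

lemma conjPow2 (hq : q ≠ 0) (A : Matrix (Fin 2) (Fin 2) K) (n : ℕ) :
    (Dmat q * A * Dmat' q) ^ n = Dmat q * A ^ n * Dmat' q := by
  induction n with
  | zero => simp [pow_zero, Matrix.mul_one, DD' q hq]
  | succ n ih => rw [pow_succ, pow_succ, ih, conjMul2 q hq]

lemma conj_t1 (hq : q ≠ 0) : t1qInv q = Dmat q * t1q q⁻¹ * Dmat' q := by
  rw [t1qInv, t1q, Dmat, Dmat', Matrix.mul_fin_two, Matrix.mul_fin_two]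
  congr 1 <;> simp [mul_inv_cancel₀ hq, neg_mul, mul_neg]

lemma conj_t2 (hq : q ≠ 0) : t2q q = Dmat q * t2qInv q⁻¹ * Dmat' q := by
  rw [t2q, t2qInv, Dmat, Dmat', Matrix.mul_fin_two, Matrix.mul_fin_two, inv_inv]
  congr 1 <;> simp [mul_inv_cancel₀ hq, neg_mul, mul_neg]

lemma qWordNeg_eq (hq : q ≠ 0) (L : List (ℕ × ℕ)) :
    qWordNeg q L = Dmat q * qWord q⁻¹ L * Dmat' q := by
  induction L with
  | nil => rw [qWordNeg, qWord, Matrix.mul_one, DD' q hq]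
  | cons p rest ih =>
      obtain ⟨a, b⟩ := p
      rw [qWordNeg, qWord, ih, conj_t1 q hq, conj_t2 q hq,
        conjPow2 q hq, conjPow2 q hq, conjMul2 q hq, conjMul2 q hq]

end Conj

lemma DND' (q : K) (hq : q ≠ 0) (N : Matrix (Fin 2) (Fin 2) K) :
    Dmat q * N * Dmat' q = !![N 0 0, -q⁻¹ * N 0 1; -q * N 1 0, N 1 1] := by
  ext i j
  simp only [mul2]
  fin_cases i <;> fin_cases j <;> simp [Dmat, Dmat'] <;> field_simp

lemma divNegMul (x a b : K) : a / (-x * b) = -x⁻¹ * (a / b) := by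
  rw [neg_mul, div_neg, div_mul_eq_div_div_swap, div_eq_inv_mul, neg_mul]

lemma mulVec2 (M : Matrix (Fin 2) (Fin 2) K) (x y : K) (i : Fin 2) :
    M.mulVec ![x, y] i = M i 0 * x + M i 1 * y := by
  simp [Matrix.mulVec, dotProduct, Fin.sum_univ_two]

lemma liouville_nonneg : (0:ℝ) ≤ liouvilleNumber 3 :=
  tsum_nonneg fun i => by positivity

lemma trQ : Transcendental ℚ (liouvilleNumber 3 + 2 : ℝ) := by
  have h0 : Transcendental ℤ (liouvilleNumber 3) :=
    transcendental_liouvilleNumber (by norm_num)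
  have h1 : Transcendental ℚ (liouvilleNumber 3) := fun h =>
    h0 ((IsFractionRing.isAlgebraic_iff ℤ ℚ ℝ).mpr h)
  have h2 := h1.aeval (X + C 2) (by simp) (by
    rw [(monic_X_add_C (2:ℚ)).leadingCoeff]; exact one_mem _)
  simpa using h2

def tval : ℝ := liouvilleNumber 3 + 2

lemma tval_gt : (1:ℝ) < tval := by
  have := liouville_nonneg; unfold tval; linarith

def psi : RatFunc ℚ →+* ℝ :=
  IsFractionRing.lift (A := ℚ[X]) (K := RatFunc ℚ) (g := (Polynomial.aeval tval).toRingHom)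
    (show Function.Injective (Polynomial.aeval tval).toRingHom from
      (transcendental_iff_injective).mp trQ)

lemma psi_X : psi RatFunc.X = tval := by
  rw [← RatFunc.algebraMap_X, psi, IsFractionRing.lift_algebraMap]
  simp

theorem stmt11 (r s : ℕ) (hr : 0 < r) (hs : 0 < s) (hco : Nat.Coprime r s)
    (L : List (ℕ × ℕ)) (hL : IsCFE L ((r : ℚ) / s)) :
    ((qWordNeg (RatFunc.X : RatFunc ℚ) L) 1 0 ≠ 0 ∧
      (qWordNeg (RatFunc.X : RatFunc ℚ) L) 0 0 /
          (qWordNeg (RatFunc.X : RatFunc ℚ) L) 1 0 =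
        -(RatFunc.X : RatFunc ℚ)⁻¹ * rightCF (RatFunc.X : RatFunc ℚ)⁻¹ L) ∧
    (((qWordNeg (RatFunc.X : RatFunc ℚ) L).mulVec ![1, 1 - RatFunc.X]) 1 ≠ 0 ∧
      ((qWordNeg (RatFunc.X : RatFunc ℚ) L).mulVec ![1, 1 - RatFunc.X]) 0 /
          ((qWordNeg (RatFunc.X : RatFunc ℚ) L).mulVec ![1, 1 - RatFunc.X]) 1 =
        -(RatFunc.X : RatFunc ℚ)⁻¹ * leftCF (RatFunc.X : RatFunc ℚ)⁻¹ L) := by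
  obtain ⟨hne, hb, -, -⟩ := hL
  have ht1 : (1:ℝ) < tval := tval_gt
  have ht0 : (0:ℝ) < tval := by linarith
  have hq0 : 0 < tval⁻¹ := inv_pos.mpr ht0
  have hq1 : tval⁻¹ < 1 := inv_lt_one_of_one_lt₀ ht1
  obtain ⟨⟨hN00, hN10, hN01, hN11⟩, hright, ⟨hv0, hv1⟩, hleft⟩ :=
    keyReal tval⁻¹ hq0 hq1 L hb hne
  have hX : (RatFunc.X : RatFunc ℚ) ≠ 0 := RatFunc.X_ne_zero
  have hpsiXi : psi (RatFunc.X)⁻¹ = tval⁻¹ := by rw [map_inv₀, psi_X]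
  set N : Matrix (Fin 2) (Fin 2) (RatFunc ℚ) := qWord (RatFunc.X)⁻¹ L with hNdef
  have hmapN : ∀ i j, psi (N i j) = qWord tval⁻¹ L i j := by
    intro i j
    have h := map_qWord psi (RatFunc.X)⁻¹ L
    rw [hpsiXi] at h
    rw [hNdef, ← h]
    simp [RingHom.mapMatrix_apply, Matrix.map_apply]
  have hN10ne : N 1 0 ≠ 0 := fun h =>
    (ne_of_gt hN10) (by rw [← hmapN 1 0, h, map_zero])
  have hfr : N 0 0 / N 1 0 = rightCF (RatFunc.X)⁻¹ L := by
    apply psi.injective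
    rw [map_div₀, hmapN, hmapN, map_rightCF, hpsiXi, hright]
  set w0 : RatFunc ℚ := N 0 0 + N 0 1 * (1 - (RatFunc.X)⁻¹) with hw0
  set w1 : RatFunc ℚ := N 1 0 + N 1 1 * (1 - (RatFunc.X)⁻¹) with hw1
  have hpw0 : psi w0 = qWord tval⁻¹ L 0 0 + qWord tval⁻¹ L 0 1 * (1 - tval⁻¹) := by
    rw [hw0, map_add, _root_.map_mul, map_sub, _root_.map_one, hmapN, hmapN, hpsiXi]
  have hpw1 : psi w1 = qWord tval⁻¹ L 1 0 + qWord tval⁻¹ L 1 1 * (1 - tval⁻¹) := by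
    rw [hw1, map_add, _root_.map_mul, map_sub, _root_.map_one, hmapN, hmapN, hpsiXi]
  have hw1ne : w1 ≠ 0 := fun h => (ne_of_gt hv1) (by rw [← hpw1, h, map_zero])
  have hfl : w0 / w1 = leftCF (RatFunc.X)⁻¹ L := by
    apply psi.injective
    rw [map_div₀, hpw0, hpw1, map_leftCF, hpsiXi, hleft]
  have hMeq : qWordNeg (RatFunc.X : RatFunc ℚ) L
      = !![N 0 0, -(RatFunc.X)⁻¹ * N 0 1; -(RatFunc.X) * N 1 0, N 1 1] := by
    rw [qWordNeg_eq (RatFunc.X) hX L, DND' (RatFunc.X) hX]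
  have e00 : qWordNeg (RatFunc.X : RatFunc ℚ) L 0 0 = N 0 0 := by rw [hMeq]; rfl
  have e01 : qWordNeg (RatFunc.X : RatFunc ℚ) L 0 1 = -(RatFunc.X)⁻¹ * N 0 1 := by
    rw [hMeq]; rfl
  have e10 : qWordNeg (RatFunc.X : RatFunc ℚ) L 1 0 = -(RatFunc.X) * N 1 0 := by
    rw [hMeq]; rfl
  have e11 : qWordNeg (RatFunc.X : RatFunc ℚ) L 1 1 = N 1 1 := by rw [hMeq]; rfl
  refine ⟨⟨?_, ?_⟩, ?_, ?_⟩
  · rw [e10]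
    exact mul_ne_zero (neg_ne_zero.mpr hX) hN10ne
  · rw [e00, e10, divNegMul, hfr]
  · rw [mulVec2, e10, e11]
    have h1 : -(RatFunc.X : RatFunc ℚ) * N 1 0 * 1 + N 1 1 * (1 - RatFunc.X)
        = -(RatFunc.X) * w1 := by
      rw [hw1]; field_simp; ring
    rw [h1]
    exact mul_ne_zero (neg_ne_zero.mpr hX) hw1ne
  · rw [mulVec2, mulVec2, e00, e01, e10, e11]
    have h0 : N 0 0 * 1 + -(RatFunc.X : RatFunc ℚ)⁻¹ * N 0 1 * (1 - RatFunc.X) = w0 := by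
      rw [hw0]; field_simp; ring
    have h1 : -(RatFunc.X : RatFunc ℚ) * N 1 0 * 1 + N 1 1 * (1 - RatFunc.X)
        = -(RatFunc.X) * w1 := by
      rw [hw1]; field_simp; ring
    rw [h0, h1, divNegMul, hfl]
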